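/- Let L_2 be the set of Kripke trees T over AP = {p} such that there exists an infinite path π from the root on which p never holds and such that at every even position 2i, the node π(2i) has some child satisfying p. Then no CCTL* formula φ satisfies L(φ) = L_2. -/
import Mathlib


mutual
/-- State formulas of Counting-CTL* (CCTL*). -/
inductive SForm (AP : Type) : Type where
  | top : SForm AP
  | atom : AP → SForm AP
  | not : SForm AP → SForm AP
  | and : SForm AP → SForm AP → SForm AP
  | ex : PForm AP → SForm AP
  | cnt : ℕ → SForm AP → SForm AP
/-- Path formulas of Counting-CTL* (CCTL*). -/
inductive PForm (AP : Type) : Type where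
  | state : SForm AP → PForm AP
  | not : PForm AP → PForm AP
  | and : PForm AP → PForm AP → PForm AP
  | next : PForm AP → PForm AP
  | until_ : PForm AP → PForm AP → PForm AP
end

/-- `T` is a tree: nonempty and prefix-closed. -/
def IsTree {D : Type} (T : Set (List D)) : Prop :=
  [] ∈ T ∧ ∀ (w : List D) (d : D), w ++ [d] ∈ T → w ∈ T

/-- Every node of `T` has a child. -/
def NonBlocking {D : Type} (T : Set (List D)) : Prop :=
  ∀ w ∈ T, ∃ d : D, w ++ [d] ∈ T

/-- `π` is an infinite path of `T` starting at node `w`. -/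
def IsPathFrom {D : Type} (T : Set (List D)) (π : ℕ → List D) (w : List D) : Prop :=
  π 0 = w ∧ ∀ i, π i ∈ T ∧ ∃ d : D, π (i + 1) = π i ++ [d]

mutual
/-- Satisfaction of a CCTL* state formula at a node of the Kripke tree `(T, Lab)`. -/
def SatS {D AP : Type} (T : Set (List D)) (Lab : List D → Set AP) :
    SForm AP → List D → Prop
  | .top, _ => True
  | .atom p, w => p ∈ Lab w
  | .not φ, w => ¬ SatS T Lab φ w
  | .and φ ψ, w => SatS T Lab φ w ∧ SatS T Lab ψ w
  | .ex ψ, w => ∃ π : ℕ → List D, IsPathFrom T π w ∧ SatP T Lab ψ π 0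
  | .cnt k φ, w => ∃ s : Finset D, k ≤ s.card ∧
      ∀ d ∈ s, w ++ [d] ∈ T ∧ SatS T Lab φ (w ++ [d])
/-- Satisfaction of a CCTL* path formula at position `i` of the infinite path `π`. -/
def SatP {D AP : Type} (T : Set (List D)) (Lab : List D → Set AP) :
    PForm AP → (ℕ → List D) → ℕ → Prop
  | .state φ, π, i => SatS T Lab φ (π i)
  | .not ψ, π, i => ¬ SatP T Lab ψ π i
  | .and ψ χ, π, i => SatP T Lab ψ π i ∧ SatP T Lab χ π i
  | .next ψ, π, i => SatP T Lab ψ π (i + 1)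
  | .until_ ψ χ, π, i =>
      ∃ j, i ≤ j ∧ SatP T Lab χ π j ∧ ∀ k, i ≤ k → k < j → SatP T Lab ψ π k
end

mutual
/-- Length (number of symbols) of a CCTL* state formula. -/
def sizeS {AP : Type} : SForm AP → ℕ
  | .top => 1
  | .atom _ => 1
  | .not φ => 1 + sizeS φ
  | .and φ ψ => 1 + sizeS φ + sizeS ψ
  | .ex ψ => 1 + sizeP ψ
  | .cnt _ φ => 1 + sizeS φ
/-- Length (number of symbols) of a CCTL* path formula. -/
def sizeP {AP : Type} : PForm AP → ℕ
  | .state φ => sizeS φ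
  | .not ψ => 1 + sizeP ψ
  | .and ψ χ => 1 + sizeP ψ + sizeP χ
  | .next ψ => 1 + sizeP ψ
  | .until_ ψ χ => 1 + sizeP ψ + sizeP χ
end

/-- Membership of the Kripke tree `(T, Lab)` in the language `L_2`: there is an
infinite path `π` from the root on which `p` never holds, such that at every
even position `2i` the node `π(2i)` has some child satisfying `p`. -/
def InL2 (T : Set (List ℕ)) (Lab : List ℕ → Set Unit) : Prop :=
  ∃ π : ℕ → List ℕ, IsPathFrom T π [] ∧ (∀ i, Lab (π i) = ∅) ∧
    ∀ i, ∃ d : ℕ, π (2 * i) ++ [d] ∈ T ∧ () ∈ Lab (π (2 * i) ++ [d])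

namespace Stmt15

/-- main-path node -/
def rep (i : ℕ) : List ℕ := List.replicate i 0

/-- p-child pattern of the tree `Tr z` -/
def Pz (z : ℤ) (q : ℕ) : Prop := (q : ℤ) < z ∨ (q : ℤ) % 2 = z % 2

/-- The family of Kripke trees. -/
def Tr (z : ℤ) : Set (List ℕ) :=
  {w | (∃ i, w = rep i) ∨ ∃ i k, Pz z i ∧ w = rep i ++ 1 :: rep k}

/-- The labelling: `p` holds iff the node contains a `1`. -/
def Lb : List ℕ → Set Unit := fun w => {_u : Unit | (1:ℕ) ∈ w}

lemma rep_succ (i : ℕ) : rep (i+1) = 0 :: rep i := rfl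

lemma rep_snoc (i : ℕ) : rep (i+1) = rep i ++ [0] := by
  simp [rep, List.replicate_succ']

lemma one_notMem_rep (i : ℕ) : (1:ℕ) ∉ rep i := by
  simp [rep]

lemma rep_inj {i j : ℕ} (h : rep i = rep j) : i = j := by
  have := congrArg List.length h; simpa [rep] using this

lemma Pz_succ (z : ℤ) (b : ℕ) : Pz (z+1) (b+1) ↔ Pz z b := by
  unfold Pz
  constructor <;> rintro (h | h)
  · left; push_cast at h ⊢; omega
  · right; push_cast at h ⊢; omega
  · left; push_cast; omega
  · right; push_cast at h ⊢; omega

lemma mem_digits {z : ℤ} {w : List ℕ} (hw : w ∈ Tr z) : ∀ x ∈ w, x = 0 ∨ x = 1 := by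
  rcases hw with ⟨i, rfl⟩ | ⟨i, k, _, rfl⟩ <;> intro x hx
  · left; exact List.eq_of_mem_replicate hx
  · have hx' : x ∈ rep i ∨ x = 1 ∨ x ∈ rep k := by
      simpa [List.mem_append] using hx
    rcases hx' with h | h | h
    · left; exact List.eq_of_mem_replicate h
    · right; exact h
    · left; exact List.eq_of_mem_replicate h

/-- characterization of branch-form lists -/
lemma branch_eq : ∀ i i' k k' : ℕ, rep i ++ 1 :: rep k = rep i' ++ 1 :: rep k' →
    i = i' ∧ k = k'
  | 0, 0, k, k' => by
    intro h
    have : rep k = rep k' := by simpa [rep] using h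
    exact ⟨rfl, rep_inj this⟩
  | 0, i'+1, k, k' => by
    intro h; exact absurd (congrArg (fun l => l.head?) h) (by simp [rep, List.replicate_succ])
  | i+1, 0, k, k' => by
    intro h; exact absurd (congrArg (fun l => l.head?) h) (by simp [rep, List.replicate_succ])
  | i+1, i'+1, k, k' => by
    intro h
    have h' : rep i ++ 1 :: rep k = rep i' ++ 1 :: rep k' := by
      have := congrArg List.tail h
      simpa [rep, List.replicate_succ] using this
    have := branch_eq i i' k k' h'
    omega

lemma rep_ne_branch {j i k : ℕ} : rep j ≠ rep i ++ 1 :: rep k := by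
  intro h
  have : (1:ℕ) ∈ rep j := by rw [h]; simp
  exact one_notMem_rep j this

end Stmt15
namespace Stmt15

def coT (x : ℕ) (T : Set (List ℕ)) : Set (List ℕ) := {w | x :: w ∈ T}
def coL (x : ℕ) (L : List ℕ → Set Unit) : List ℕ → Set Unit := fun w => L (x :: w)

lemma coT_Tr (z : ℤ) : coT 0 (Tr z) = Tr (z-1) := by
  ext w
  constructor
  · rintro (⟨i, hi⟩ | ⟨i, k, hp, hik⟩)
    · match i, hi with
      | i+1, hi =>
        left; exact ⟨i, by simpa [rep_succ] using hi⟩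
    · match i, hik with
      | 0, hik => simp [rep] at hik
      | i+1, hik =>
        right
        refine ⟨i, k, (Pz_succ (z-1) i).mp (by simpa using hp), ?_⟩
        simpa [rep_succ] using hik
  · rintro (⟨i, rfl⟩ | ⟨i, k, hp, rfl⟩)
    · exact Or.inl ⟨i+1, by simp [rep_succ]⟩
    · exact Or.inr ⟨i+1, k, by simpa using (Pz_succ (z-1) i).mpr hp, by simp [rep_succ]⟩

lemma coL_Lb : coL 0 Lb = Lb := by
  funext w; ext u; simp [coL, Lb]

/-- the all-`p` chain tree -/
def Ch : Set (List ℕ) := {w | ∃ k, w = rep k}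

lemma coT_Tr_one {z : ℤ} (hz : Pz z 0) : coT 1 (Tr z) = Ch := by
  ext w
  constructor
  · rintro (⟨i, hi⟩ | ⟨i, k, hp, hik⟩)
    · exact absurd hi.symm (by cases i <;> simp [rep, List.replicate_succ])
    · match i, hik with
      | 0, hik => exact ⟨k, by simpa [rep] using hik⟩
      | i+1, hik => simp [rep, List.replicate_succ] at hik
  · rintro ⟨k, rfl⟩
    exact Or.inr ⟨0, k, hz, by simp [rep]⟩

lemma coT_Ch : coT 0 Ch = Ch := by
  ext w
  constructor
  · rintro ⟨k, hk⟩
    match k, hk with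
    | k+1, hk => exact ⟨k, by simpa [rep_succ] using hk⟩
  · rintro ⟨k, rfl⟩; exact ⟨k+1, by simp [rep_succ]⟩

lemma coL_one : coL 0 (coL 1 Lb) = coL 1 Lb := by
  funext w; ext u; simp [coL, Lb]

lemma sizeS_pos (φ : SForm Unit) : 1 ≤ sizeS φ := by
  cases φ <;> simp [sizeS, sizeP] <;> omega

lemma sizeP_pos (ψ : PForm Unit) : 1 ≤ sizeP ψ := by
  cases ψ
  case state φ => exact sizeS_pos φ
  all_goals simp [sizeP] <;> omega

/-- The transfer lemma: satisfaction under a node `x :: w` of `T` is satisfaction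
under `w` in the co-tree. -/
theorem transfer (n : ℕ) :
    (∀ φ : SForm Unit, sizeS φ ≤ n → ∀ T L x w,
      (SatS T L φ (x :: w) ↔ SatS (coT x T) (coL x L) φ w)) ∧
    (∀ ψ : PForm Unit, sizeP ψ ≤ n → ∀ T L x (π : ℕ → List ℕ) i,
      (∀ j, ∃ u, π j = x :: u) →
      (SatP T L ψ π i ↔ SatP (coT x T) (coL x L) ψ (fun j => (π j).tail) i)) := by
  induction n using Nat.strong_induction_on with
  | _ n ih =>
  have part1 : ∀ φ : SForm Unit, sizeS φ ≤ n → ∀ T L x w,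
      (SatS T L φ (x :: w) ↔ SatS (coT x T) (coL x L) φ w) := by
    intro φ hφ T L x w
    cases φ with
      | top => simp [SatS]
      | atom p => simp [SatS, coL]
      | not φ' =>
        have h' : sizeS φ' < n := by simp [sizeS] at hφ; omega
        simp only [SatS]
        rw [(ih _ h').1 φ' le_rfl]
      | and φ₁ φ₂ =>
        have h₁ : sizeS φ₁ < n := by simp [sizeS] at hφ; omega
        have h₂ : sizeS φ₂ < n := by simp [sizeS] at hφ; omega
        simp only [SatS]
        rw [(ih _ h₁).1 φ₁ le_rfl, (ih _ h₂).1 φ₂ le_rfl]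
      | cnt k φ' =>
        have h' : sizeS φ' < n := by simp [sizeS] at hφ; omega
        simp only [SatS]
        refine exists_congr fun s => and_congr_right fun _ => forall_congr' fun d =>
          forall_congr' fun _ => ?_
        have : (x :: w) ++ [d] = x :: (w ++ [d]) := by simp
        rw [this, (ih _ h').1 φ' le_rfl]
        exact Iff.rfl
      | ex ψ =>
        have h' : sizeP ψ < n := by simp [sizeS] at hφ; omega
        simp only [SatS]
        constructor
        · rintro ⟨π, hπ, hsat⟩
          have hx : ∀ j, ∃ u, π j = x :: u := by
            intro j
            induction j with
            | zero => exact ⟨w, hπ.1⟩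
            | succ j ihj =>
              obtain ⟨u, hu⟩ := ihj
              obtain ⟨d, hd⟩ := (hπ.2 j).2
              exact ⟨u ++ [d], by rw [hd, hu]; simp⟩
          refine ⟨fun j => (π j).tail, ⟨?_, fun i => ?_⟩, ?_⟩
          · show (π 0).tail = w
            rw [hπ.1]; rfl
          · constructor
            · obtain ⟨u, hu⟩ := hx i
              show (π i).tail ∈ coT x T
              have : x :: (π i).tail = π i := by rw [hu]; rfl
              show x :: (π i).tail ∈ T
              rw [this]; exact (hπ.2 i).1
            · obtain ⟨d, hd⟩ := (hπ.2 i).2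
              obtain ⟨u, hu⟩ := hx i
              refine ⟨d, ?_⟩
              show (π (i+1)).tail = (π i).tail ++ [d]
              rw [hd, hu]; simp
          · exact ((ih _ h').2 ψ le_rfl T L x π 0 hx).mp hsat
        · rintro ⟨τ, hτ, hsat⟩
          refine ⟨fun j => x :: τ j, ⟨?_, fun i => ?_⟩, ?_⟩
          · show x :: τ 0 = x :: w
            rw [hτ.1]
          · refine ⟨hτ.2 i |>.1, ?_⟩
            obtain ⟨d, hd⟩ := (hτ.2 i).2
            refine ⟨d, ?_⟩
            show x :: τ (i+1) = (x :: τ i) ++ [d]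
            rw [hd]; simp
          · have := (ih _ h').2 ψ le_rfl T L x (fun j => x :: τ j) 0 (fun j => ⟨τ j, rfl⟩)
            rw [this]
            simpa using hsat
  refine ⟨part1, ?_⟩
  · intro ψ hψ T L x π i hx
    cases ψ with
    | state φ =>
      simp only [SatP]
      obtain ⟨u, hu⟩ := hx i
      show SatS T L φ (π i) ↔ SatS (coT x T) (coL x L) φ (π i).tail
      rw [hu]
      exact part1 φ (by simpa [sizeP] using hψ) T L x u
    | not ψ' =>
      have h' : sizeP ψ' < n := by simp [sizeP] at hψ; omega
      simp only [SatP]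
      rw [(ih _ h').2 ψ' le_rfl T L x π i hx]
    | and ψ₁ ψ₂ =>
      have h₁ : sizeP ψ₁ < n := by simp [sizeP] at hψ; omega
      have h₂ : sizeP ψ₂ < n := by simp [sizeP] at hψ; omega
      simp only [SatP]
      rw [(ih _ h₁).2 ψ₁ le_rfl T L x π i hx, (ih _ h₂).2 ψ₂ le_rfl T L x π i hx]
    | next ψ' =>
      have h' : sizeP ψ' < n := by simp [sizeP] at hψ; omega
      simp only [SatP]
      rw [(ih _ h').2 ψ' le_rfl T L x π (i+1) hx]
    | until_ ψ₁ ψ₂ =>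
      have h₁ : sizeP ψ₁ < n := by simp [sizeP] at hψ; omega
      have h₂ : sizeP ψ₂ < n := by simp [sizeP] at hψ; omega
      simp only [SatP]
      refine exists_congr fun j => and_congr_right fun _ => ?_
      rw [(ih _ h₂).2 ψ₂ le_rfl T L x π j hx]
      refine and_congr_right fun _ => forall_congr' fun k => forall_congr' fun _ =>
        forall_congr' fun _ => ?_
      rw [(ih _ h₁).2 ψ₁ le_rfl T L x π k hx]

/-- state-formula transfer, packaged -/
lemma transS (φ : SForm Unit) (T : Set (List ℕ)) (L : List ℕ → Set Unit) (x : ℕ)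
    (w : List ℕ) : SatS T L φ (x :: w) ↔ SatS (coT x T) (coL x L) φ w :=
  (transfer (sizeS φ)).1 φ le_rfl T L x w

lemma transP (ψ : PForm Unit) (T : Set (List ℕ)) (L : List ℕ → Set Unit) (x : ℕ)
    (π : ℕ → List ℕ) (i : ℕ) (hx : ∀ j, ∃ u, π j = x :: u) :
    SatP T L ψ π i ↔ SatP (coT x T) (coL x L) ψ (fun j => (π j).tail) i :=
  (transfer (sizeP ψ)).2 ψ le_rfl T L x π i hx

/-- suffix/shift lemma -/
theorem suf (n : ℕ) : ∀ ψ : PForm Unit, sizeP ψ ≤ n → ∀ T L (π : ℕ → List ℕ) c i,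
    SatP T L ψ (fun j => π (c + j)) i ↔ SatP T L ψ π (c + i) := by
  induction n using Nat.strong_induction_on with
  | _ n ih =>
  intro ψ hψ T L π c i
  cases ψ with
  | state φ => simp only [SatP]
  | not ψ' =>
    have h' : sizeP ψ' < n := by simp [sizeP] at hψ; omega
    simp only [SatP]; rw [ih _ h' ψ' le_rfl]
  | and ψ₁ ψ₂ =>
    have h₁ : sizeP ψ₁ < n := by simp [sizeP] at hψ; omega
    have h₂ : sizeP ψ₂ < n := by simp [sizeP] at hψ; omega
    simp only [SatP]; rw [ih _ h₁ ψ₁ le_rfl, ih _ h₂ ψ₂ le_rfl]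
  | next ψ' =>
    have h' : sizeP ψ' < n := by simp [sizeP] at hψ; omega
    simp only [SatP]; rw [ih _ h' ψ' le_rfl]
    exact iff_of_eq (congrArg _ (by omega))
  | until_ ψ₁ ψ₂ =>
    have h₁ : sizeP ψ₁ < n := by simp [sizeP] at hψ; omega
    have h₂ : sizeP ψ₂ < n := by simp [sizeP] at hψ; omega
    simp only [SatP]
    constructor
    · rintro ⟨j, hij, hχ, hint⟩
      refine ⟨c + j, by omega, (ih _ h₂ ψ₂ le_rfl T L π c j).mp hχ, fun k hk1 hk2 => ?_⟩
      have := (ih _ h₁ ψ₁ le_rfl T L π c (k - c)).mp (hint (k - c) (by omega) (by omega))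
      have hkc : c + (k - c) = k := by omega
      rwa [hkc] at this
    · rintro ⟨j, hij, hχ, hint⟩
      refine ⟨j - c, by omega, ?_, fun k hk1 hk2 => ?_⟩
      · have := (ih _ h₂ ψ₂ le_rfl T L π c (j - c)).mpr
        have hjc : c + (j - c) = j := by omega
        rw [hjc] at this
        exact this hχ
      · exact (ih _ h₁ ψ₁ le_rfl T L π c k).mpr (hint (c + k) (by omega) (by omega))

lemma sufP (ψ : PForm Unit) (T : Set (List ℕ)) (L : List ℕ → Set Unit)
    (π : ℕ → List ℕ) (c i : ℕ) :
    SatP T L ψ (fun j => π (c + j)) i ↔ SatP T L ψ π (c + i) :=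
  suf (sizeP ψ) ψ le_rfl T L π c i

end Stmt15
namespace Stmt15

/-- the path from the root that branches off at time `b` -/
def Br (b j : ℕ) : List ℕ := if j ≤ b then rep j else rep b ++ 1 :: rep (j - b - 1)

/-- a path spec: `none` = the main path, `some b` = branch at time `b` -/
def Path : Option ℕ → ℕ → List ℕ
  | none => rep
  | some b => Br b

def Valid (z : ℤ) : Option ℕ → Prop
  | none => True
  | some b => Pz z b

lemma path_succ_eq (t : Option ℕ) (j : ℕ) :
    Path (t.map (· + 1)) (j + 1) = 0 :: Path t j := by
  cases t with
  | none => simp [Path, rep_succ]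
  | some b =>
    simp only [Option.map_some, Path, Br]
    by_cases h : j ≤ b
    · simp [h, rep_succ]
    · have h' : ¬ (j + 1 ≤ b + 1) := by omega
      simp [h, h', rep_succ, List.cons_append]

lemma shiftAll (ψ : PForm Unit) (z : ℤ) (t : Option ℕ) (i : ℕ) :
    SatP (Tr (z+1)) Lb ψ (Path (t.map (· + 1))) (i+1) ↔ SatP (Tr z) Lb ψ (Path t) i := by
  have h1 : SatP (Tr (z+1)) Lb ψ (Path (t.map (· + 1))) (1 + i)
      ↔ SatP (Tr (z+1)) Lb ψ (fun j => Path (t.map (· + 1)) (1 + j)) i :=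
    (sufP ψ _ _ _ 1 i).symm
  have hfe : (fun j => Path (t.map (· + 1)) (1 + j)) = fun j => 0 :: Path t j := by
    funext j; rw [Nat.add_comm 1 j, path_succ_eq]
  have h2 := transP ψ (Tr (z+1)) Lb 0 (fun j => 0 :: Path t j) i (fun j => ⟨Path t j, rfl⟩)
  rw [coT_Tr, coL_Lb] at h2
  have hz : z + 1 - 1 = z := by ring
  rw [hz] at h2
  have : (1 : ℕ) + i = i + 1 := by omega
  rw [this] at h1
  rw [h1, hfe, h2]
  exact Iff.rfl

lemma shiftChain (ψ : PForm Unit) (z : ℤ) (hz : Pz z 0) (i : ℕ) :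
    SatP (Tr z) Lb ψ (Path (some 0)) (i+1) ↔ SatP Ch (coL 1 Lb) ψ rep i := by
  have h1 : SatP (Tr z) Lb ψ (Path (some 0)) (1 + i)
      ↔ SatP (Tr z) Lb ψ (fun j => Path (some 0) (1 + j)) i := (sufP ψ _ _ _ 1 i).symm
  have hfe : (fun j => Path (some 0) (1 + j)) = fun j => 1 :: rep j := by
    funext j; simp [Path, Br, rep]
  have h2 := transP ψ (Tr z) Lb 1 (fun j => 1 :: rep j) i (fun j => ⟨rep j, rfl⟩)
  rw [coT_Tr_one hz] at h2
  have : (1 : ℕ) + i = i + 1 := by omega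
  rw [this] at h1
  rw [h1, hfe, h2]
  exact Iff.rfl

lemma Pz_shift (i : ℕ) : ∀ (z : ℤ) (b : ℕ), i ≤ b → (Pz (z - i) (b - i) ↔ Pz z b) := by
  induction i with
  | zero => intro z b _; simp
  | succ i ihi =>
    intro z b hb
    match b, hb with
    | b+1, hb =>
      have h1 : z - (↑(i+1) : ℤ) = (z - 1) - i := by push_cast; ring
      have h2 : b + 1 - (i+1) = b - i := by omega
      rw [h1, h2, ihi (z-1) b (by omega)]
      have := Pz_succ (z-1) b
      rw [show z - 1 + 1 = z by ring] at this
      exact this.symm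

lemma pos_zero (i : ℕ) : ∀ (ψ : PForm Unit) (z : ℤ) (t : Option ℕ),
    (t = none ∨ ∃ b, t = some b ∧ i ≤ b) →
    (SatP (Tr z) Lb ψ (Path t) i ↔ SatP (Tr (z - i)) Lb ψ (Path (t.map (· - i))) 0) := by
  induction i with
  | zero =>
    intro ψ z t _
    have : t.map (· - 0) = t := by cases t <;> simp
    rw [this]; simp
  | succ i ihi =>
    intro ψ z t ht
    have key : ∀ t' : Option ℕ, t = t'.map (· + 1) →
        (t' = none ∨ ∃ b, t' = some b ∧ i ≤ b) →
        (SatP (Tr z) Lb ψ (Path t) (i+1) ↔ SatP (Tr (z - (i+1:ℕ))) Lb ψ (Path (t.map (· - (i+1)))) 0) := by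
      intro t' h1 h2
      have hSH := shiftAll ψ (z - 1) t' i
      rw [show z - 1 + 1 = z by ring, ← h1] at hSH
      rw [hSH, ihi ψ (z-1) t' h2]
      have hz : z - 1 - i = z - (↑(i+1):ℤ) := by push_cast; ring
      have htm : t'.map (· - i) = t.map (· - (i+1)) := by
        cases t' <;> simp [h1]
      rw [hz, htm]
    rcases ht with rfl | ⟨b, rfl, hb⟩
    · exact key none rfl (Or.inl rfl)
    · match b, hb with
      | b+1, hb => exact key (some b) (by simp) (Or.inr ⟨b, rfl, by omega⟩)

/-- satisfaction strictly beyond the branch point lands in the chain,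
    independently of `z` and `b` -/
lemma pos_chain : ∀ (b : ℕ) (z : ℤ), Pz z b → ∀ (ψ : PForm Unit) (m : ℕ),
    (SatP (Tr z) Lb ψ (Path (some b)) (b + 1 + m) ↔ SatP Ch (coL 1 Lb) ψ rep m) := by
  intro b
  induction b with
  | zero =>
    intro z hz ψ m
    rw [show 0 + 1 + m = m + 1 by omega]
    exact shiftChain ψ z hz m
  | succ b ihb =>
    intro z hz ψ m
    have hz' : Pz (z-1) b := by
      have := Pz_succ (z-1) b
      rw [show z - 1 + 1 = z by ring] at this
      exact this.mp hz
    have hSH := shiftAll ψ (z-1) (some b) (b + 1 + m)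
    rw [show z - 1 + 1 = z by ring] at hSH
    have : (some b).map (· + 1) = some (b+1) := by simp
    rw [this] at hSH
    rw [show b + 1 + 1 + m = (b + 1 + m) + 1 by omega, hSH]
    exact ihb (z-1) hz' ψ m

end Stmt15
namespace Stmt15

lemma count_one_le {z : ℤ} {w : List ℕ} (hw : w ∈ Tr z) : w.count 1 ≤ 1 := by
  rcases hw with ⟨i, rfl⟩ | ⟨i, k, _, rfl⟩
  · simp [rep, List.count_replicate]
  · simp [rep, List.count_append, List.count_replicate]

lemma isPath_Path (z : ℤ) (t : Option ℕ) (hv : Valid z t) :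
    IsPathFrom (Tr z) (Path t) [] := by
  constructor
  · cases t <;> simp [Path, Br, rep]
  · intro i
    constructor
    · cases t with
      | none => exact Or.inl ⟨i, rfl⟩
      | some b =>
        by_cases h : i ≤ b
        · exact Or.inl ⟨i, by simp [Path, Br, h]⟩
        · exact Or.inr ⟨b, i - b - 1, hv, by simp [Path, Br, h]⟩
    · cases t with
      | none => exact ⟨0, by simp [Path, rep_snoc]⟩
      | some b =>
        by_cases h1 : i + 1 ≤ b
        · refine ⟨0, ?_⟩
          have h2 : i ≤ b := by omega
          simp only [Path, Br, if_pos h1, if_pos h2]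
          exact rep_snoc i
        · by_cases h2 : i ≤ b
          · refine ⟨1, ?_⟩
            simp only [Path, Br, if_neg h1, if_pos h2]
            have hib : i = b := by omega
            subst hib
            rw [show i + 1 - i - 1 = 0 by omega]
            rfl
          · refine ⟨0, ?_⟩
            simp only [Path, Br, if_neg h1, if_neg h2]
            rw [show i + 1 - b - 1 = (i - b - 1) + 1 by omega, rep_snoc (i - b - 1)]
            simp

lemma path_length {z : ℤ} {π : ℕ → List ℕ} (h : IsPathFrom (Tr z) π []) :
    ∀ j, (π j).length = j := by
  intro j
  induction j with
  | zero => simp [h.1]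
  | succ j ihj =>
    obtain ⟨d, hd⟩ := (h.2 j).2
    simp [hd, ihj]

lemma path_class {z : ℤ} {π : ℕ → List ℕ} (h : IsPathFrom (Tr z) π []) :
    ∃ t, Valid z t ∧ ∀ j, π j = Path t j := by
  by_cases hmain : ∀ j, π j = rep j
  · exact ⟨none, trivial, hmain⟩
  · push_neg at hmain
    have hex : ∃ j, π j ≠ rep j := hmain
    classical
    let j₀ := Nat.find hex
    have hj₀ : π j₀ ≠ rep j₀ := Nat.find_spec hex
    have hmin : ∀ j, j < j₀ → π j = rep j := by
      intro j hj
      by_contra hc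
      have h2 : j₀ ≤ j := Nat.find_le hc
      omega
    have hj₀pos : 1 ≤ j₀ := by
      rcases Nat.eq_zero_or_pos j₀ with h0 | h1
      · exfalso; apply hj₀; rw [h0, h.1]; rfl
      · exact h1
    set b := j₀ - 1 with hb
    have hπb : π b = rep b := hmin b (by omega)
    -- the step from b to b+1 must append a 1
    obtain ⟨d, hd⟩ := (h.2 b).2
    have hbd : π (b + 1) = rep b ++ [d] := by rw [hd, hπb]
    have hdig := mem_digits (h.2 (b+1)).1 d (by rw [hbd]; simp)
    have hd1 : d = 1 := by
      rcases hdig with h0 | h1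
      · exfalso
        apply hj₀
        rw [show j₀ = b + 1 by omega, hbd, h0, ← rep_snoc]
      · exact h1
    have hπb1 : π (b+1) = rep b ++ 1 :: rep 0 := by
      rw [hbd, hd1]; rfl
    have hPz : Pz z b := by
      have hmem := (h.2 (b+1)).1
      rw [hπb1] at hmem
      rcases hmem with ⟨i, hi⟩ | ⟨i, k, hp, hik⟩
      · exact absurd hi.symm rep_ne_branch
      · obtain ⟨rfl, rfl⟩ := branch_eq _ _ _ _ hik.symm
        exact hp
    have hchain : ∀ m, π (b + 1 + m) = rep b ++ 1 :: rep m := by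
      intro m
      induction m with
      | zero => exact hπb1
      | succ m ihm =>
        obtain ⟨d', hd'⟩ := (h.2 (b+1+m)).2
        have hmem := (h.2 (b+1+m+1)).1
        have hval : π (b+1+m+1) = (rep b ++ 1 :: rep m) ++ [d'] := by
          rw [show b+1+m+1 = (b+1+m)+1 by omega, hd', ihm]
        have hdig' := mem_digits hmem d' (by rw [hval]; simp)
        have hd'0 : d' = 0 := by
          rcases hdig' with h0 | h1
          · exact h0
          · exfalso
            have hcnt := count_one_le hmem
            rw [hval, h1] at hcnt
            simp [List.count_append, rep, List.count_replicate] at hcnt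
        rw [show b+1+(m+1) = (b+1+m)+1 by omega, hd', ihm, hd'0]
        rw [show rep (m+1) = rep m ++ [0] from rep_snoc m]
        simp
    refine ⟨some b, hPz, fun j => ?_⟩
    by_cases hj : j ≤ b
    · rw [hmin j (by omega)]; simp [Path, Br, hj]
    · have : j = b + 1 + (j - b - 1) := by omega
      rw [this, hchain]
      simp [Path, Br, show ¬ (b + 1 + (j - b - 1) ≤ b) by omega]
      rw [show b + 1 + (j - b - 1) - b - 1 = j - b - 1 by omega]

lemma snoc_left_inj {w u : List ℕ} {d e : ℕ} (h : w ++ [d] = u ++ [e]) : w = u := by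
  have hl : w.length = u.length := by
    have := congrArg List.length h
    simpa using this
  exact (List.append_inj h hl).1

lemma isTree_Tr (z : ℤ) : IsTree (Tr z) := by
  constructor
  · exact Or.inl ⟨0, rfl⟩
  · intro w d hw
    rcases hw with ⟨i, hi⟩ | ⟨i, k, hp, hik⟩
    · match i, hi with
      | 0, hi => exact absurd hi (by simp [rep])
      | i+1, hi =>
        rw [rep_snoc] at hi
        exact Or.inl ⟨i, snoc_left_inj hi⟩
    · match k, hik with
      | 0, hik =>
        have hik' : w ++ [d] = rep i ++ [1] := hik
        exact Or.inl ⟨i, snoc_left_inj hik'⟩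
      | k+1, hik =>
        have heq : rep i ++ 1 :: rep (k+1) = (rep i ++ 1 :: rep k) ++ [0] := by
          rw [show rep (k+1) = rep k ++ [0] from rep_snoc k]
          simp
        rw [heq] at hik
        exact Or.inr ⟨i, k, hp, snoc_left_inj hik⟩

lemma nonBlocking_Tr (z : ℤ) : NonBlocking (Tr z) := by
  intro w hw
  rcases hw with ⟨i, rfl⟩ | ⟨i, k, hp, rfl⟩
  · exact ⟨0, Or.inl ⟨i+1, (rep_snoc i).symm⟩⟩
  · refine ⟨0, Or.inr ⟨i, k+1, hp, ?_⟩⟩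
    rw [show rep (k+1) = rep k ++ [0] from rep_snoc k]
    simp

lemma lab_rep (i : ℕ) : Lb (rep i) = ∅ := by
  ext u; simp [Lb, one_notMem_rep]

lemma inL2_iff (z : ℤ) : InL2 (Tr z) Lb ↔ ∀ i : ℕ, Pz z (2*i) := by
  constructor
  · rintro ⟨π, hπ, hlab, hp⟩
    obtain ⟨t, hv, hpath⟩ := path_class hπ
    have ht : t = none := by
      cases t with
      | none => rfl
      | some b =>
        exfalso
        have h1 : π (b+1) = rep b ++ 1 :: rep 0 := by
          rw [hpath (b+1)]; simp [Path, Br, show ¬ (b+1 ≤ b) by omega]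
        have : () ∈ Lb (π (b+1)) := by rw [h1]; simp [Lb]
        rw [hlab (b+1)] at this
        exact this
    subst ht
    intro i
    obtain ⟨d, hmem, hlab'⟩ := hp i
    rw [hpath (2*i)] at hmem hlab'
    have hπ2i : Path none (2*i) = rep (2*i) := rfl
    rw [hπ2i] at hmem hlab'
    have hd1 : d = 1 := by
      have : (1:ℕ) ∈ rep (2*i) ++ [d] := by simpa [Lb] using hlab'
      rcases List.mem_append.mp this with h | h
      · exact absurd h (one_notMem_rep _)
      · have : (1:ℕ) = d := by simpa using h
        omega
    subst hd1
    rcases hmem with ⟨j, hj⟩ | ⟨j, k, hpz, hjk⟩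
    · refine absurd hj.symm (?_ : rep j ≠ rep (2*i) ++ [1])
      have := @rep_ne_branch j (2*i) 0
      simpa [rep] using this
    · obtain ⟨h1, h2⟩ := branch_eq (2*i) j 0 k hjk
      rw [← h1] at hpz
      exact hpz
  · intro hall
    refine ⟨rep, isPath_Path z none trivial, fun i => lab_rep i, fun i => ⟨1, ?_, ?_⟩⟩
    · exact Or.inr ⟨2*i, 0, hall i, rfl⟩
    · simp [Lb]

end Stmt15
namespace Stmt15

def QS (z : ℤ) (φ : SForm Unit) : Prop := SatS (Tr z) Lb φ []
def QP (z : ℤ) (t : Option ℕ) (ψ : PForm Unit) : Prop := SatP (Tr z) Lb ψ (Path t) 0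

/-- the matching relation between branch specs in `Tr z` and `Tr (z+1)` -/
def Rel (s : ℕ) (z : ℤ) : Option ℕ → Option ℕ → Prop
  | none, none => True
  | some b, some c => (c = b ∧ (b:ℤ) + 2^s ≤ z) ∨ (c = b + 1 ∧ (2:ℤ)^s ≤ (b:ℤ))
  | _, _ => False

lemma path_zero (t : Option ℕ) : Path t 0 = [] := by
  cases t <;> simp [Path, Br, rep]

lemma two_pow_pos (s : ℕ) : (0:ℤ) < 2^s := by positivity

lemma two_pow_split {s : ℕ} (hs : 1 ≤ s) : (2:ℤ)^s = 2^(s-1) + 2^(s-1) := by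
  obtain ⟨r, rfl⟩ : ∃ r, s = r + 1 := ⟨s-1, by omega⟩
  rw [Nat.add_sub_cancel, pow_succ]
  ring

theorem master (s : ℕ) :
    (∀ φ : SForm Unit, sizeS φ ≤ s → ∀ z : ℤ, 2^s ≤ z → (QS z φ ↔ QS (z+1) φ)) ∧
    (∀ ψ : PForm Unit, sizeP ψ ≤ s → ∀ z : ℤ, 2^s ≤ z → ∀ t u, Valid z t →
      Valid (z+1) u → Rel s z t u → (QP z t ψ ↔ QP (z+1) u ψ)) := by
  induction s using Nat.strong_induction_on with
  | _ s ih =>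
  have part1 : ∀ φ : SForm Unit, sizeS φ ≤ s → ∀ z : ℤ, 2^s ≤ z →
      (QS z φ ↔ QS (z+1) φ) := by
    intro φ hφ z hz
    have hz1 : (1:ℤ) ≤ z := le_trans (two_pow_pos s) hz
    cases φ with
    | top => simp [QS, SatS]
    | atom p => simp [QS, SatS, Lb]
    | not φ' =>
      have hs1 : 1 ≤ s := le_trans (sizeS_pos _) hφ
      have h' : sizeS φ' ≤ s - 1 := by simp [sizeS] at hφ; omega
      have hbud : (2:ℤ)^(s-1) ≤ z := by
        have e := two_pow_split hs1; have p := two_pow_pos (s-1); omega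
      simp only [QS, SatS]
      rw [show (SatS (Tr z) Lb φ' [] ↔ SatS (Tr (z+1)) Lb φ' []) from
        (ih (s-1) (by omega)).1 φ' h' z hbud]
    | and φ₁ φ₂ =>
      have hs1 : 1 ≤ s := le_trans (sizeS_pos _) hφ
      have h₁ : sizeS φ₁ ≤ s - 1 := by simp [sizeS] at hφ; omega
      have h₂ : sizeS φ₂ ≤ s - 1 := by simp [sizeS] at hφ; omega
      have hbud : (2:ℤ)^(s-1) ≤ z := by
        have e := two_pow_split hs1; have p := two_pow_pos (s-1); omega
      simp only [QS, SatS]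
      rw [show (SatS (Tr z) Lb φ₁ [] ↔ SatS (Tr (z+1)) Lb φ₁ []) from
        (ih (s-1) (by omega)).1 φ₁ h₁ z hbud,
        show (SatS (Tr z) Lb φ₂ [] ↔ SatS (Tr (z+1)) Lb φ₂ []) from
        (ih (s-1) (by omega)).1 φ₂ h₂ z hbud]
    | cnt k φ' =>
      have hs1 : 1 ≤ s := le_trans (sizeS_pos _) hφ
      have h' : sizeS φ' ≤ s - 1 := by simp [sizeS] at hφ; omega
      -- transfers for the two children of the root
      have trans0 : ∀ w : ℤ, SatS (Tr w) Lb φ' [0] ↔ QS (w-1) φ' := by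
        intro w
        have := transS φ' (Tr w) Lb 0 []
        rwa [coT_Tr, coL_Lb] at this
      have trans1 : ∀ w : ℤ, 0 < w → (SatS (Tr w) Lb φ' [1] ↔ SatS Ch (coL 1 Lb) φ' []) := by
        intro w hw
        have := transS φ' (Tr w) Lb 1 []
        rwa [coT_Tr_one (Or.inl (by exact_mod_cast hw))] at this
      have hQ : QS (z-1) φ' ↔ QS z φ' := by
        have := (ih (s-1) (by omega)).1 φ' h' (z-1) (by
          have e := two_pow_split hs1; have p := two_pow_pos (s-1); omega)
        rwa [show z - 1 + 1 = z by ring] at this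
      have mem1 : ∀ w : ℤ, 0 < w → [1] ∈ Tr w := by
        intro w hw
        exact Or.inr ⟨0, 0, Or.inl (by exact_mod_cast hw), rfl⟩
      have mem0 : ∀ w : ℤ, [0] ∈ Tr w := fun w => Or.inl ⟨1, rfl⟩
      simp only [QS, SatS]
      constructor
      · rintro ⟨s', hk, hall⟩
        refine ⟨s', hk, fun d hd => ?_⟩
        obtain ⟨hmem, hsat⟩ := hall d hd
        have hd01 := mem_digits hmem d (by simp)
        rcases hd01 with rfl | rfl
        · exact ⟨mem0 (z+1), by
            rw [show ([] : List ℕ) ++ [0] = [0] by rfl] at hsat ⊢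
            rw [trans0 (z+1), show z + 1 - 1 = z by ring]
            exact hQ.mp ((trans0 z).mp hsat)⟩
        · exact ⟨mem1 (z+1) (by omega), by
            rw [show ([] : List ℕ) ++ [1] = [1] by rfl] at hsat ⊢
            rw [trans1 (z+1) (by omega)]
            exact (trans1 z (by omega)).mp hsat⟩
      · rintro ⟨s', hk, hall⟩
        refine ⟨s', hk, fun d hd => ?_⟩
        obtain ⟨hmem, hsat⟩ := hall d hd
        have hd01 := mem_digits hmem d (by simp)
        rcases hd01 with rfl | rfl
        · exact ⟨mem0 z, by
            rw [show ([] : List ℕ) ++ [0] = [0] by rfl] at hsat ⊢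
            rw [trans0 z]
            rw [trans0 (z+1), show z + 1 - 1 = z by ring] at hsat
            exact hQ.mpr hsat⟩
        · exact ⟨mem1 z (by omega), by
            rw [show ([] : List ℕ) ++ [1] = [1] by rfl] at hsat ⊢
            rw [trans1 z (by omega)]
            exact (trans1 (z+1) (by omega)).mp hsat⟩
    | ex ψ' =>
      have hs1 : 1 ≤ s := le_trans (sizeS_pos _) hφ
      have h' : sizeP ψ' ≤ s - 1 := by simp [sizeS] at hφ; omega
      have hbud : (2:ℤ)^(s-1) ≤ z := by
        have e := two_pow_split hs1; have p := two_pow_pos (s-1); omega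
      simp only [QS, SatS]
      constructor
      · rintro ⟨π, hπ, hsat⟩
        obtain ⟨t, hv, hpath⟩ := path_class hπ
        have hπeq : π = Path t := funext hpath
        subst hπeq
        -- choose the matching branch spec in Tr (z+1)
        obtain ⟨u, hvu, hrel⟩ : ∃ u, Valid (z+1) u ∧ Rel (s-1) z t u := by
          cases t with
          | none => exact ⟨none, trivial, trivial⟩
          | some b =>
            by_cases hb : (b:ℤ) + 2^(s-1) ≤ z
            · refine ⟨some b, ?_, Or.inl ⟨rfl, hb⟩⟩
              have := two_pow_pos (s-1)
              exact Or.inl (by push_cast; omega)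
            · refine ⟨some (b+1), (Pz_succ z b).mpr hv, Or.inr ⟨rfl, ?_⟩⟩
              have h2 := two_pow_split hs1
              omega
        refine ⟨Path u, isPath_Path (z+1) u hvu, ?_⟩
        exact ((ih (s-1) (by omega)).2 ψ' h' z hbud t u hv hvu hrel).mp hsat
      · rintro ⟨π, hπ, hsat⟩
        obtain ⟨u, hvu, hpath⟩ := path_class hπ
        have hπeq : π = Path u := funext hpath
        subst hπeq
        obtain ⟨t, hvt, hrel⟩ : ∃ t, Valid z t ∧ Rel (s-1) z t u := by
          cases u with
          | none => exact ⟨none, trivial, trivial⟩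
          | some c =>
            by_cases hc : (c:ℤ) + 2^(s-1) ≤ z
            · refine ⟨some c, ?_, Or.inl ⟨rfl, hc⟩⟩
              have := two_pow_pos (s-1)
              exact Or.inl (by push_cast; omega)
            · have hc1 : 1 ≤ c := by
                have h2 := two_pow_split hs1
                have h3 := two_pow_pos (s-1)
                omega
              refine ⟨some (c-1), ?_, Or.inr ⟨by omega, ?_⟩⟩
              · have := (Pz_succ z (c-1)).mp (by rwa [show c - 1 + 1 = c by omega])
                exact this
              · have h2 := two_pow_split hs1
                push_cast
                omega
        refine ⟨Path t, isPath_Path z t hvt, ?_⟩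
        exact ((ih (s-1) (by omega)).2 ψ' h' z hbud t u hvt hvu hrel).mpr hsat
  refine ⟨part1, ?_⟩
  intro ψ hψ z hz t u hvt hvu hrel
  have hz1 : (1:ℤ) ≤ z := le_trans (two_pow_pos s) hz
  have hs1 : 1 ≤ s := le_trans (sizeP_pos _) hψ
  have hbud : (2:ℤ)^(s-1) ≤ z := by
    have e := two_pow_split hs1; have p := two_pow_pos (s-1); omega
  -- position-wise equivalence in the "near" mode
  have posEq : ∀ b : ℕ, Pz z b → Pz (z+1) b → (b:ℤ) + 2^s ≤ z →
      ∀ χ : PForm Unit, sizeP χ ≤ s - 1 → ∀ k,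
      (SatP (Tr z) Lb χ (Path (some b)) k ↔ SatP (Tr (z+1)) Lb χ (Path (some b)) k) := by
    intro b hvb hvb' hnear χ hχ k
    by_cases hk : k ≤ b
    · have e1 := pos_zero k χ z (some b) (Or.inr ⟨b, rfl, hk⟩)
      have e2 := pos_zero k χ (z+1) (some b) (Or.inr ⟨b, rfl, hk⟩)
      rw [e1, e2]
      have hmap : (some b).map (· - k) = some (b - k) := by simp
      rw [hmap]
      have := (ih (s-1) (by omega)).2 χ hχ (z - k) (by
        have e := two_pow_split hs1
        have p := two_pow_pos (s-1)
        have hzk : (k:ℤ) ≤ b := by exact_mod_cast hk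
        omega) (some (b-k)) (some (b-k))
        (by exact (Pz_shift k z b hk).mpr hvb)
        (by
          have := (Pz_shift k (z+1) b hk).mpr hvb'
          rwa [show z + 1 - k = z - k + 1 by ring] at this)
        (Or.inl ⟨rfl, by
          have h2 := two_pow_split hs1
          have p := two_pow_pos (s-1)
          have hzk : (k:ℤ) ≤ b := by exact_mod_cast hk
          have hbk : ((b - k : ℕ) : ℤ) = (b:ℤ) - k := by
            push_cast [hk]; ring
          omega⟩)
      rw [show z + 1 - (k:ℤ) = z - k + 1 by ring]
      exact this
    · have hk' : k = b + 1 + (k - b - 1) := by omega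
      rw [hk']
      rw [pos_chain b z hvb χ (k - b - 1), pos_chain b (z+1) hvb' χ (k - b - 1)]
  -- the shift-mode treatment of until
  have huntil_shift : ∀ (t' : Option ℕ) (ψ₁ ψ₂ : PForm Unit),
      (QP z t' ψ₁ ↔ QP (z+1) (t'.map (· + 1)) ψ₁) →
      (QP z t' ψ₂ ↔ QP (z+1) (t'.map (· + 1)) ψ₂) →
      (SatP (Tr z) Lb (PForm.until_ ψ₁ ψ₂) (Path t') 0 ↔
       SatP (Tr (z+1)) Lb (PForm.until_ ψ₁ ψ₂) (Path (t'.map (· + 1))) 0) := by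
    intro t' ψ₁ ψ₂ ih1 ih2
    simp only [SatP]
    constructor
    · rintro ⟨j, -, h2, h1⟩
      cases j with
      | zero => exact ⟨0, le_rfl, ih2.mp h2, fun k _ hk => by omega⟩
      | succ j' =>
        refine ⟨j' + 1 + 1, by omega, (shiftAll ψ₂ z t' (j'+1)).mpr h2, fun k _ hk => ?_⟩
        cases k with
        | zero => exact ih1.mp (h1 0 (by omega) (by omega))
        | succ k' => exact (shiftAll ψ₁ z t' k').mpr (h1 k' (by omega) (by omega))
    · rintro ⟨j, -, h2, h1⟩
      cases j with
      | zero => exact ⟨0, le_rfl, ih2.mpr h2, fun k _ hk => by omega⟩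
      | succ j' =>
        refine ⟨j', by omega, (shiftAll ψ₂ z t' j').mp h2, fun k _ hk => ?_⟩
        exact (shiftAll ψ₁ z t' k).mp (h1 (k+1) (by omega) (by omega))
  -- downgrade of the relation
  have hrel' : Rel (s-1) z t u := by
    cases t with
    | none => cases u with
      | none => trivial
      | some c => exact absurd hrel (by simp [Rel])
    | some b => cases u with
      | none => exact absurd hrel (by simp [Rel])
      | some c =>
        rcases hrel with ⟨hc, hn⟩ | ⟨hc, hf⟩
        · exact Or.inl ⟨hc, by
            have e := two_pow_split hs1; have p := two_pow_pos (s-1); omega⟩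
        · exact Or.inr ⟨hc, by
            have e := two_pow_split hs1; have p := two_pow_pos (s-1); omega⟩
  -- mode analysis: either a pure shift (main path or far branch), or a near branch
  have relms : (u = t.map (· + 1) ∧ Rel (s-1) z t u ∧
        (∀ b : ℕ, t = some b → (2:ℤ)^s ≤ (b:ℤ))) ∨
      (∃ b : ℕ, t = some b ∧ u = some b ∧ (b:ℤ) + 2^s ≤ z) := by
    cases t with
    | none => cases u with
      | none => exact Or.inl ⟨rfl, trivial, fun b hb => by simp at hb⟩
      | some c => exact absurd hrel (by simp [Rel])
    | some b => cases u with
      | none => exact absurd hrel (by simp [Rel])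
      | some c =>
        rcases hrel with ⟨rfl, hn⟩ | ⟨rfl, hf⟩
        · exact Or.inr ⟨c, rfl, rfl, hn⟩
        · refine Or.inl ⟨by simp, ?_, fun b' hb' => by
            simp at hb'; subst hb'; exact hf⟩
          exact Or.inr ⟨rfl, by
            have e := two_pow_split hs1; have p := two_pow_pos (s-1); omega⟩
  cases ψ with
  | state φ =>
    have hφ : sizeS φ ≤ s := by simpa [sizeP] using hψ
    simp only [QP, SatP, path_zero]
    exact part1 φ hφ z hz
  | not ψ' =>
    have h' : sizeP ψ' ≤ s - 1 := by simp [sizeP] at hψ; omega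
    simp only [QP, SatP]
    rw [show (SatP (Tr z) Lb ψ' (Path t) 0 ↔ SatP (Tr (z+1)) Lb ψ' (Path u) 0) from
      (ih (s-1) (by omega)).2 ψ' h' z hbud t u hvt hvu hrel']
  | and ψ₁ ψ₂ =>
    have h₁ : sizeP ψ₁ ≤ s - 1 := by simp [sizeP] at hψ; omega
    have h₂ : sizeP ψ₂ ≤ s - 1 := by simp [sizeP] at hψ; omega
    simp only [QP, SatP]
    rw [show (SatP (Tr z) Lb ψ₁ (Path t) 0 ↔ SatP (Tr (z+1)) Lb ψ₁ (Path u) 0) from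
      (ih (s-1) (by omega)).2 ψ₁ h₁ z hbud t u hvt hvu hrel',
      show (SatP (Tr z) Lb ψ₂ (Path t) 0 ↔ SatP (Tr (z+1)) Lb ψ₂ (Path u) 0) from
      (ih (s-1) (by omega)).2 ψ₂ h₂ z hbud t u hvt hvu hrel']
  | next ψ' =>
    have h' : sizeP ψ' ≤ s - 1 := by simp [sizeP] at hψ; omega
    simp only [QP, SatP]
    rcases relms with ⟨hmap, hrel1, hfar⟩ | ⟨b, rfl, rfl, hnear⟩
    · subst hmap
      have hbud' : (2:ℤ)^(s-1) ≤ z - 1 := by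
        have e := two_pow_split hs1; have p := two_pow_pos (s-1); omega
      cases t with
      | none =>
        have eL := shiftAll ψ' (z-1) none 0
        rw [show z - 1 + 1 = z by ring] at eL
        have eR := shiftAll ψ' z none 0
        rw [show (none : Option ℕ).map (· + 1) = none by simp] at eL eR ⊢
        rw [show (0:ℕ) + 1 = 1 by rfl] at eL eR
        rw [eL, eR]
        have hIH := (ih (s-1) (by omega)).2 ψ' h' (z-1) hbud' none none trivial trivial trivial
        rwa [show z - 1 + 1 = z by ring] at hIH
      | some b =>
        have hfb : (2:ℤ)^s ≤ (b:ℤ) := hfar b rfl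
        have hb1 : 1 ≤ b := by have p := two_pow_pos s; omega
        obtain ⟨b', rfl⟩ : ∃ b', b = b' + 1 := ⟨b - 1, by omega⟩
        have eL := shiftAll ψ' (z-1) (some b') 0
        rw [show z - 1 + 1 = z by ring] at eL
        have eR := shiftAll ψ' z (some (b'+1)) 0
        simp only [Option.map_some] at eL eR ⊢
        rw [show (0:ℕ) + 1 = 1 by rfl] at eL eR
        rw [eL, eR]
        have hvt' : Valid (z-1) (some b') := by
          have h2 := Pz_succ (z-1) b'
          rw [show z - 1 + 1 = z by ring] at h2
          exact h2.mp hvt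
        have hvu' : Valid ((z-1)+1) (some (b'+1)) := by
          rw [show z - 1 + 1 = z by ring]; exact hvt
        have hrelf : Rel (s-1) (z-1) (some b') (some (b'+1)) := by
          refine Or.inr ⟨rfl, ?_⟩
          have e := two_pow_split hs1; have p := two_pow_pos (s-1)
          push_cast at hfb ⊢
          omega
        have hIH := (ih (s-1) (by omega)).2 ψ' h' (z-1) hbud' (some b') (some (b'+1))
          hvt' hvu' hrelf
        rwa [show z - 1 + 1 = z by ring] at hIH
    · exact posEq b hvt hvu hnear ψ' h' 1
  | until_ ψ₁ ψ₂ =>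
    have h₁ : sizeP ψ₁ ≤ s - 1 := by simp [sizeP] at hψ; omega
    have h₂ : sizeP ψ₂ ≤ s - 1 := by simp [sizeP] at hψ; omega
    rcases relms with ⟨hmap, hrel1, hfar⟩ | ⟨b, rfl, rfl, hnear⟩
    · subst hmap
      exact huntil_shift t ψ₁ ψ₂
        ((ih (s-1) (by omega)).2 ψ₁ h₁ z hbud t _ hvt hvu hrel1)
        ((ih (s-1) (by omega)).2 ψ₂ h₂ z hbud t _ hvt hvu hrel1)
    · simp only [QP, SatP]
      exact exists_congr fun j => and_congr_right fun _ =>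
        and_congr (posEq b hvt hvu hnear ψ₂ h₂ j)
          (forall_congr' fun k => forall_congr' fun _ => forall_congr' fun _ =>
            posEq b hvt hvu hnear ψ₁ h₁ k)

end Stmt15
/-- No CCTL* formula defines the language `L_2`: there is no state formula `φ`
such that, for every (nonblocking) Kripke tree, the tree belongs to `L_2` iff
its root satisfies `φ`. -/
theorem stmt15 :
    ¬ ∃ φ : SForm Unit, ∀ (T : Set (List ℕ)) (Lab : List ℕ → Set Unit),
      IsTree T → NonBlocking T → (InL2 T Lab ↔ SatS T Lab φ []) := by
  rintro ⟨φ, hφ⟩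
  open Stmt15 in
  · set s := sizeS φ with hs
    have e2 : (2:ℤ)^(s+1) = 2 * 2^s := by rw [pow_succ]; ring
    have p := two_pow_pos s
    set z : ℤ := 2^(s+1) with hzdef
    have hz : (2:ℤ)^s ≤ z := by omega
    have h1 := hφ (Tr z) Lb (isTree_Tr z) (nonBlocking_Tr z)
    have h2 := hφ (Tr (z+1)) Lb (isTree_Tr (z+1)) (nonBlocking_Tr (z+1))
    have hin : InL2 (Tr z) Lb := by
      refine (inL2_iff z).mpr fun i => Or.inr ?_
      push_cast
      omega
    have hsat := h1.mp hin
    have hmas := (master s).1 φ le_rfl z hz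
    simp only [QS] at hmas
    have hin' := h2.mpr (hmas.mp hsat)
    have hall := (inL2_iff (z+1)).mp hin'
    rcases hall (z+1).toNat with h | h
    · push_cast at h
      omega
    · push_cast at h
      omega
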